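/- Let G be a graph obtained as follows: A is an independent set of 2m vertices, B is a graph consisting of m+1 disjoint edges (so 2m+2 vertices), and all edges between A and B are present. Then G is a graph on n = 4m+2 vertices with minimum degree 2m+1 = n/2, and G contains at most ⌊(m+1)/2⌋ edge-disjoint Hamilton cycles. -/

import Mathlib

/-- The join of an independent set of `2*m` vertices with a perfect matching
on `2*m+2` vertices (the matching pairs `2k` with `2k+1`). -/
def matchJoin (m : ℕ) : SimpleGraph (Fin (2*m) ⊕ Fin (2*m+2)) where
  Adj x y :=
    match x, y with
    | Sum.inl _, Sum.inl _ => False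
    | Sum.inl _, Sum.inr _ => True
    | Sum.inr _, Sum.inl _ => True
    | Sum.inr a, Sum.inr b => a ≠ b ∧ (a : ℕ) / 2 = (b : ℕ) / 2
  symm := by
    constructor
    rintro (a | a) (b | b) h
    · exact h
    · trivial
    · trivial
    · exact ⟨h.1.symm, h.2.symm⟩
  loopless := by
    constructor
    rintro (a | a) h
    · exact h
    · exact h.1 rfl

noncomputable instance (m : ℕ) : DecidableRel (matchJoin m).Adj :=
  Classical.decRel _


open Finset SimpleGraph

abbrev Vm (m : ℕ) := Fin (2*m) ⊕ Fin (2*m+2)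

def isBB (m : ℕ) : Sym2 (Vm m) → Bool :=
  Sym2.lift ⟨fun x y => x.isRight && y.isRight, fun _ _ => Bool.and_comm _ _⟩

@[simp] lemma isBB_mk (m : ℕ) (x y : Vm m) : isBB m s(x, y) = (x.isRight && y.isRight) := rfl

def Mset (m : ℕ) : Finset (Sym2 (Vm m)) :=
  (univ : Finset (Fin (m+1))).image
    (fun k : Fin (m+1) => s(Sum.inr ⟨2*(k:ℕ), by have := k.isLt; omega⟩,
      Sum.inr ⟨2*(k:ℕ)+1, by have := k.isLt; omega⟩))

lemma card_Mset (m : ℕ) : (Mset m).card = m + 1 := by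
  rw [Mset, Finset.card_image_of_injective, card_univ, Fintype.card_fin]
  intro k k' he
  rw [Sym2.eq_iff] at he
  have := k.isLt; have := k'.isLt
  rcases he with ⟨h1, -⟩ | ⟨h1, h2⟩ <;>
  · simp only [Sum.inr.injEq, Fin.mk.injEq] at *
    exact Fin.ext (by omega)

lemma edge_mem_Mset (m : ℕ) {e : Sym2 (Vm m)} (he : e ∈ (matchJoin m).edgeSet)
    (hb : isBB m e = true) : e ∈ Mset m := by
  induction e with
  | _ x y =>
    simp only [isBB_mk, Bool.and_eq_true, Sum.isRight_iff] at hb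
    obtain ⟨⟨a, rfl⟩, ⟨b, rfl⟩⟩ := hb
    have hadj : (matchJoin m).Adj (Sum.inr a) (Sum.inr b) := he
    obtain ⟨hne, hdiv⟩ := hadj
    have ha := a.isLt; have hb2 := b.isLt
    have hne' : (a : ℕ) ≠ (b : ℕ) := fun h => hne (Fin.ext h)
    rw [Mset, Finset.mem_image]
    refine ⟨⟨(a : ℕ)/2, by omega⟩, mem_univ _, ?_⟩
    rcases (by omega : ((a:ℕ) = 2*((a:ℕ)/2) ∧ (b:ℕ) = 2*((a:ℕ)/2)+1)
        ∨ ((a:ℕ) = 2*((a:ℕ)/2)+1 ∧ (b:ℕ) = 2*((a:ℕ)/2))) with ⟨h1, h2⟩ | ⟨h1, h2⟩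
    · rw [Sym2.eq_iff]; left
      exact ⟨by congr 1; exact Fin.ext h1.symm, by congr 1; exact Fin.ext h2.symm⟩
    · rw [Sym2.eq_iff]; right
      exact ⟨by congr 1; exact Fin.ext h2.symm, by congr 1; exact Fin.ext h1.symm⟩

section
variable {m : ℕ} {a : Vm m} {c : (matchJoin m).Walk a a}

open SimpleGraph.Walk List

lemma tail_nodup (hc : c.IsHamiltonianCycle) : c.support.tail.Nodup := by
  have := hc.isHamiltonian_tail.isPath.support_nodup
  rwa [support_tail_of_not_nil _ hc.1.not_nil] at this

lemma tail_mem (hc : c.IsHamiltonianCycle) (x : Vm m) : x ∈ c.support.tail := by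
  have := hc.isHamiltonian_tail.mem_support x
  rwa [support_tail_of_not_nil _ hc.1.not_nil] at this

lemma tail_countP (hc : c.IsHamiltonianCycle) :
    c.support.tail.countP (fun x : Vm m => x.isLeft) = 2*m := by
  have hnd := tail_nodup hc
  have htf : c.support.tail.toFinset = univ := by
    ext x; simp [tail_mem hc]
  rw [List.countP_eq_length_filter, ← List.toFinset_card_of_nodup (hnd.filter _),
    List.toFinset_filter, htf]
  have : univ.filter (fun x : Vm m => x.isLeft) = univ.image Sum.inl := by
    ext x; cases x <;> simp
  rw [this, Finset.card_image_of_injective _ Sum.inl_injective, card_univ, Fintype.card_fin]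

lemma dropLast_countP (hc : c.IsHamiltonianCycle) :
    c.support.dropLast.countP (fun x : Vm m => x.isLeft) = 2*m := by
  have h1 : c.support.dropLast ++ [a] = c.support := by
    have := List.dropLast_concat_getLast (l := c.support) c.support_ne_nil
    rwa [c.getLast_support] at this
  have h2 : c.support = a :: c.support.tail := c.support_eq_cons
  have key := congrArg (List.countP (fun x : Vm m => x.isLeft)) (h1.trans h2)
  have e1 : List.countP (fun x : Vm m => x.isLeft) (c.support.dropLast ++ [a])
      = List.countP (fun x : Vm m => x.isLeft) c.support.dropLast
        + List.countP (fun x : Vm m => x.isLeft) [a] := List.countP_append ..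
  have e2 : List.countP (fun x : Vm m => x.isLeft) (a :: c.support.tail)
      = List.countP (fun x : Vm m => x.isLeft) [a]
        + List.countP (fun x : Vm m => x.isLeft) c.support.tail := by
    rw [show a :: c.support.tail = [a] ++ c.support.tail from rfl, List.countP_append]
  have := tail_countP hc
  omega

lemma countP_edges (hc : c.IsHamiltonianCycle) :
    c.edges.countP (fun e => isBB m e) = 2 := by
  have hlen : c.darts.length = 4*m + 2 := by
    rw [length_darts, hc.length_eq]
    simp only [Fintype.card_sum, Fintype.card_fin]
    omega
  have hfst : c.darts.countP (fun d => d.fst.isLeft) = 2*m := by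
    have h := List.countP_map (p := fun x : Vm m => x.isLeft)
      (f := fun d : (matchJoin m).Dart => d.fst) (l := c.darts)
    rw [show List.map (fun d : (matchJoin m).Dart => d.fst) c.darts
        = c.support.dropLast from map_fst_darts c, dropLast_countP hc] at h
    exact h.symm
  have hsnd : c.darts.countP (fun d => d.snd.isLeft) = 2*m := by
    have h := List.countP_map (p := fun x : Vm m => x.isLeft)
      (f := fun d : (matchJoin m).Dart => d.snd) (l := c.darts)
    rw [show List.map (fun d : (matchJoin m).Dart => d.snd) c.darts
        = c.support.tail from map_snd_darts c, tail_countP hc] at h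
    exact h.symm
  have hsplit : c.darts.length = c.darts.countP (fun d => d.fst.isLeft)
      + c.darts.countP (fun d => !d.fst.isLeft) := by
    have := List.length_eq_countP_add_countP (p := fun d : (matchJoin m).Dart => d.fst.isLeft)
      (l := c.darts)
    rw [this]
    congr 1
    exact List.countP_congr (fun d _ => by simp)
  have hsplit2 : c.darts.countP (fun d => !d.fst.isLeft)
      = c.darts.countP (fun d => !d.fst.isLeft && d.snd.isLeft)
        + c.darts.countP (fun d => !d.fst.isLeft && !d.snd.isLeft) := by
    have := List.countP_eq_countP_filter_add c.darts
      (fun d : (matchJoin m).Dart => !d.fst.isLeft) (fun d => d.snd.isLeft)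
    rw [List.countP_filter, List.countP_filter] at this
    rw [this]
  have he1 : c.darts.countP (fun d => !d.fst.isLeft && d.snd.isLeft)
      = c.darts.countP (fun d => d.snd.isLeft) := by
    apply List.countP_congr
    intro d _
    have hadj := d.adj
    constructor
    · intro hx; exact (Bool.and_eq_true _ _ ▸ hx).2
    · intro hx
      rw [Bool.and_eq_true]
      refine ⟨?_, hx⟩
      cases h1 : d.fst with
      | inl x =>
        exfalso
        rw [Sum.isLeft_iff] at hx
        obtain ⟨y, h2⟩ := hx
        rw [h1, h2] at hadj
        exact hadj
      | inr x => rfl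
  have hedges : c.edges.countP (fun e => isBB m e) =
      c.darts.countP (fun d => !d.fst.isLeft && !d.snd.isLeft) := by
    have h := List.countP_map (p := fun e : Sym2 (Vm m) => isBB m e)
      (f := SimpleGraph.Dart.edge) (l := c.darts)
    have h2 : c.edges = List.map SimpleGraph.Dart.edge c.darts := rfl
    rw [← h2] at h
    rw [h]
    apply List.countP_congr
    intro d _
    have : isBB m d.edge = (!d.fst.isLeft && !d.snd.isLeft) := by
      show isBB m s(d.fst, d.snd) = _
      rw [isBB_mk]
      cases d.fst <;> cases d.snd <;> rfl
    simp only [Function.comp]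
    rw [this]
  rw [hedges]
  omega

end

open Finset SimpleGraph

def partner (m : ℕ) (a : Fin (2*m+2)) : Fin (2*m+2) :=
  ⟨(a : ℕ) + 1 - 2 * ((a : ℕ) % 2), by omega⟩

lemma adj_inr_iff (m : ℕ) (a b : Fin (2*m+2)) :
    (matchJoin m).Adj (Sum.inr a) (Sum.inr b) ↔ b = partner m a := by
  show (a ≠ b ∧ (a : ℕ) / 2 = (b : ℕ) / 2) ↔ _
  have := a.isLt; have := b.isLt
  simp only [Ne, Fin.ext_iff, partner]
  omega

lemma nbhd_inl (m : ℕ) (a : Fin (2*m)) :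
    (matchJoin m).neighborFinset (Sum.inl a) = univ.image Sum.inr := by
  ext y
  cases y with
  | inl b => simp [SimpleGraph.mem_neighborFinset]; exact fun h => h.elim
  | inr b => simp [SimpleGraph.mem_neighborFinset]; trivial

lemma nbhd_inr (m : ℕ) (a : Fin (2*m+2)) :
    (matchJoin m).neighborFinset (Sum.inr a)
      = insert (Sum.inr (partner m a)) (univ.image Sum.inl) := by
  ext y
  cases y with
  | inl b => simp [SimpleGraph.mem_neighborFinset]; trivial
  | inr b =>
    simp [SimpleGraph.mem_neighborFinset, adj_inr_iff]

lemma deg_inl (m : ℕ) (a : Fin (2*m)) : (matchJoin m).degree (Sum.inl a) = 2*m+2 := by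
  rw [SimpleGraph.degree, nbhd_inl, Finset.card_image_of_injective _ Sum.inr_injective,
    card_univ, Fintype.card_fin]

lemma deg_inr (m : ℕ) (a : Fin (2*m+2)) : (matchJoin m).degree (Sum.inr a) = 2*m+1 := by
  rw [SimpleGraph.degree, nbhd_inr, Finset.card_insert_of_notMem (by simp),
    Finset.card_image_of_injective _ Sum.inl_injective, card_univ, Fintype.card_fin]

/-- The join `G` of an independent set `A` of `2*m` vertices with a perfect matching `B`
on `2*m+2` vertices is a graph on `n = 4*m+2` vertices with minimum degree
`2*m+1 = n/2`, and it contains at most `⌊(m+1)/2⌋` pairwise edge-disjoint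
Hamilton cycles. -/
theorem stmt_0 (m : ℕ) :
    Fintype.card (Fin (2*m) ⊕ Fin (2*m+2)) = 4*m+2 ∧
    (∀ v, 2*m+1 ≤ (matchJoin m).degree v) ∧
    (∃ v, (matchJoin m).degree v = 2*m+1) ∧
    (∀ (h : ℕ) (v : Fin h → (Fin (2*m) ⊕ Fin (2*m+2)))
      (w : ∀ i, (matchJoin m).Walk (v i) (v i)),
      (∀ i, (w i).IsHamiltonianCycle) →
      (∀ i j, i ≠ j → ∀ e ∈ (w i).edges, e ∉ (w j).edges) →
      h ≤ (m+1)/2) := by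
  refine ⟨by rw [Fintype.card_sum, Fintype.card_fin, Fintype.card_fin]; omega, ?_, ?_, ?_⟩
  · rintro (x | x)
    · rw [deg_inl]; omega
    · rw [deg_inr]
  · exact ⟨Sum.inr ⟨0, by omega⟩, deg_inr m _⟩
  · intro h v w hw hdisj
    set S : Fin h → Finset (Sym2 (Vm m)) :=
      fun i => ((w i).edges.filter (fun e => isBB m e)).toFinset with hS
    have hcard : ∀ i, 2 ≤ (S i).card := by
      intro i
      have hnd : ((w i).edges.filter (fun e => isBB m e)).Nodup :=
        ((hw i).isCycle.edges_nodup).filter _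
      rw [hS]
      rw [List.toFinset_card_of_nodup hnd, ← List.countP_eq_length_filter,
        countP_edges (hw i)]
    have hsub : ∀ i, S i ⊆ Mset m := by
      intro i e he
      rw [hS, List.mem_toFinset, List.mem_filter] at he
      exact edge_mem_Mset m ((w i).edges_subset_edgeSet he.1) he.2
    have hdisj' : ∀ i ∈ (univ : Finset (Fin h)), ∀ j ∈ (univ : Finset (Fin h)),
        i ≠ j → Disjoint (S i) (S j) := by
      intro i _ j _ hij
      rw [Finset.disjoint_left]
      intro e hei hej
      rw [hS, List.mem_toFinset, List.mem_filter] at hei hej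
      exact hdisj i j hij e hei.1 hej.1
    have hmain : 2 * h ≤ m + 1 := by
      calc 2*h = ∑ _i : Fin h, 2 := by simp [mul_comm]
      _ ≤ ∑ i : Fin h, (S i).card := Finset.sum_le_sum fun i _ => hcard i
      _ = ((univ : Finset (Fin h)).biUnion S).card := (Finset.card_biUnion hdisj').symm
      _ ≤ (Mset m).card := Finset.card_le_card (Finset.biUnion_subset.2 fun i _ => hsub i)
      _ = m+1 := card_Mset m
    omega
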